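/- For lists of non-negative integers mu (length K) and nu (length L), and small complex vectors alpha in C^K, beta in C^L, with sigma fixed such that Re(2*sigma + alpha_i + beta_j) > 1, the mixed partial derivative D^mu_alpha D^nu_beta of prod_{i=1}^K prod_{j=1}^L zeta(2*sigma + alpha_i + beta_j) evaluated at alpha = beta = 0 equals mu! * nu! * sum over pairs of K x L non-negative-integer matrices Q (with row sums mu) and R (with column sums nu) of prod_{i,j} zeta^{(Q_{ij} + R_{ij})}(2*sigma) / (Q_{ij}! R_{ij}!). -/

import Mathlib

open scoped BigOperators

/-- Partial derivative in the `i`-th coordinate. -/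
noncomputable def pderivCoord {s : ℕ} (i : Fin s) (f : (Fin s → ℂ) → ℂ) :
    (Fin s → ℂ) → ℂ :=
  fun y => deriv (fun t => f (Function.update y i t)) (y i)

/-- The mixed partial derivative `D^μ = ∏ᵢ (∂/∂yᵢ)^{μᵢ}`. -/
noncomputable def mixedDeriv {s : ℕ} (μ : Fin s → ℕ) (f : (Fin s → ℂ) → ℂ) :
    (Fin s → ℂ) → ℂ :=
  ((List.ofFn (fun i : Fin s => (pderivCoord i)^[μ i])).foldr (· ∘ ·) id) f

set_option maxHeartbeats 1000000

lemma prod_apply_split {s : ℕ} (h : Fin s → ℂ → ℂ) (y : Fin s → ℂ) (i : Fin s) :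
    ∏ k, h k (y k) = h i (y i) * ∏ k ∈ Finset.univ.erase i, h k (y k) :=
  (Finset.mul_prod_erase _ _ (Finset.mem_univ i)).symm

lemma prod_update_eq {s : ℕ} (g : Fin s → ℂ → ℂ) (y : Fin s → ℂ) (i : Fin s) (t : ℂ) :
    ∏ k, g k (Function.update y i t k) =
      g i t * ∏ k ∈ Finset.univ.erase i, g k (y k) := by
  rw [prod_apply_split (fun k => g k) (Function.update y i t) i, Function.update_self]
  congr 1
  exact Finset.prod_congr rfl fun k hk => by
    rw [Function.update_of_ne (Finset.ne_of_mem_erase hk)]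

lemma pderivCoord_prod {s : ℕ} (i : Fin s) (g : Fin s → ℂ → ℂ) :
    pderivCoord i (fun y => ∏ k, g k (y k)) =
      fun y => ∏ k, Function.update g i (deriv (g i)) k (y k) := by
  funext y
  have h1 : (fun t => ∏ k, g k (Function.update y i t k)) =
      fun t => g i t * ∏ k ∈ Finset.univ.erase i, g k (y k) := by
    funext t; exact prod_update_eq g y i t
  have h2 : pderivCoord i (fun y => ∏ k, g k (y k)) y
      = deriv (fun t => g i t * ∏ k ∈ Finset.univ.erase i, g k (y k)) (y i) := by
    simp only [pderivCoord]; rw [h1]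
  rw [h2, congrFun (deriv_mul_const_field' _) (y i)]
  rw [prod_apply_split (fun k => Function.update g i (deriv (g i)) k) y i,
    Function.update_self]
  congr 1
  exact (Finset.prod_congr rfl fun k hk => by
    rw [Function.update_of_ne (Finset.ne_of_mem_erase hk)]).symm

lemma pderivCoord_iterate_prod {s : ℕ} (i : Fin s) (g : Fin s → ℂ → ℂ) (n : ℕ) :
    (pderivCoord i)^[n] (fun y => ∏ k, g k (y k)) =
      fun y => ∏ k, Function.update g i (deriv^[n] (g i)) k (y k) := by
  induction n with
  | zero => simp [Function.update_eq_self]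
  | succ n IH =>
    rw [Function.iterate_succ_apply', IH, pderivCoord_prod]
    funext y
    refine Finset.prod_congr rfl fun k _ => ?_
    rw [Function.update_idem, Function.update_self, Function.iterate_succ_apply' deriv n (g i)]

lemma foldr_pderiv_prod {s : ℕ} (μ : Fin s → ℕ) :
    ∀ (l : List (Fin s)), l.Nodup → ∀ (g : Fin s → ℂ → ℂ),
      ((l.map fun i => (pderivCoord i)^[μ i]).foldr (· ∘ ·) id) (fun y => ∏ k, g k (y k)) =
        fun y => ∏ k, (if k ∈ l then deriv^[μ k] (g k) else g k) (y k) := by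
  intro l
  induction l with
  | nil => intro _ g; simp
  | cons i l IH =>
    intro hnd g
    have hi : i ∉ l := (List.nodup_cons.mp hnd).1
    rw [List.map_cons, List.foldr_cons, Function.comp_apply,
      IH (List.nodup_cons.mp hnd).2 g, pderivCoord_iterate_prod]
    funext y
    refine Finset.prod_congr rfl fun k _ => ?_
    rw [Function.update_apply]
    by_cases hk : k = i
    · subst hk
      simp [hi, if_neg hi]
    · simp only [if_neg hk, List.mem_cons]
      by_cases hkl : k ∈ l <;> simp [hkl, hk]

lemma mixedDeriv_prod {s : ℕ} (μ : Fin s → ℕ) (g : Fin s → ℂ → ℂ) :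
    mixedDeriv μ (fun y => ∏ k, g k (y k)) =
      fun y => ∏ k, iteratedDeriv (μ k) (g k) (y k) := by
  rw [mixedDeriv, List.ofFn_eq_map,
    foldr_pderiv_prod μ (List.finRange s) (List.nodup_finRange s) g]
  funext y
  exact Finset.prod_congr rfl fun k _ => by
    rw [if_pos (List.mem_finRange k), iteratedDeriv_eq_iterate]

lemma pderivCoord_eqOn {s : ℕ} (i : Fin s) {V : Set (Fin s → ℂ)} (hV : IsOpen V)
    {f g : (Fin s → ℂ) → ℂ} (h : Set.EqOn f g V) :
    Set.EqOn (pderivCoord i f) (pderivCoord i g) V := by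
  intro y hy
  have hc : Continuous fun t : ℂ => Function.update y i t :=
    continuous_const.update i continuous_id
  have hyy : Function.update y i (y i) = y := Function.update_eq_self i y
  have hmem : ∀ᶠ t in nhds (y i), Function.update y i t ∈ V :=
    hc.continuousAt.preimage_mem_nhds (by rw [hyy]; exact hV.mem_nhds hy)
  apply Filter.EventuallyEq.deriv_eq
  filter_upwards [hmem] with t ht using h ht

lemma pderivCoord_iterate_eqOn {s : ℕ} (i : Fin s) {V : Set (Fin s → ℂ)} (hV : IsOpen V)
    (n : ℕ) : ∀ {f g : (Fin s → ℂ) → ℂ}, Set.EqOn f g V →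
    Set.EqOn ((pderivCoord i)^[n] f) ((pderivCoord i)^[n] g) V := by
  induction n with
  | zero => intro f g h; exact h
  | succ n IH =>
    intro f g h
    rw [Function.iterate_succ_apply', Function.iterate_succ_apply']
    exact pderivCoord_eqOn i hV (IH h)

lemma foldr_pderiv_eqOn {s : ℕ} (μ : Fin s → ℕ) {V : Set (Fin s → ℂ)} (hV : IsOpen V) :
    ∀ (l : List (Fin s)) {f g : (Fin s → ℂ) → ℂ}, Set.EqOn f g V →
      Set.EqOn (((l.map fun i => (pderivCoord i)^[μ i]).foldr (· ∘ ·) id) f)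
        (((l.map fun i => (pderivCoord i)^[μ i]).foldr (· ∘ ·) id) g) V := by
  intro l
  induction l with
  | nil => intro f g h; exact h
  | cons i l IH =>
    intro f g h
    rw [List.map_cons, List.foldr_cons]
    exact pderivCoord_iterate_eqOn i hV (μ i) (IH h)

lemma mixedDeriv_congr {s : ℕ} (μ : Fin s → ℕ) {V : Set (Fin s → ℂ)} (hV : IsOpen V)
    {f g : (Fin s → ℂ) → ℂ} (h : Set.EqOn f g V) :
    Set.EqOn (mixedDeriv μ f) (mixedDeriv μ g) V := by
  rw [mixedDeriv, mixedDeriv, List.ofFn_eq_map]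
  exact foldr_pderiv_eqOn μ hV (List.finRange s) h

def comps (m n : ℕ) : Finset (Fin m → ℕ) :=
  (Fintype.piFinset fun _ => Finset.range (n + 1)).filter (fun q => ∑ j, q j = n)

lemma mem_comps {m n : ℕ} (q : Fin m → ℕ) : q ∈ comps m n ↔ ∑ j, q j = n := by
  constructor
  · intro h; exact (Finset.mem_filter.mp h).2
  · intro h
    refine Finset.mem_filter.mpr ⟨Fintype.mem_piFinset.mpr fun j => ?_, h⟩
    refine Finset.mem_range.mpr (Nat.lt_succ_of_le ?_)
    rw [← h]
    exact Finset.single_le_sum (fun i _ => Nat.zero_le _) (Finset.mem_univ j)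

lemma comps_zero (m : ℕ) : comps m 0 = {fun _ => 0} := by
  ext q
  rw [mem_comps, Finset.mem_singleton]
  constructor
  · intro h; funext j
    exact (Finset.sum_eq_zero_iff.mp h) j (Finset.mem_univ j)
  · intro h; subst h; simp

lemma analyticOnNhd_iteratedDeriv {U : Set ℂ} {f : ℂ → ℂ}
    (hf : AnalyticOnNhd ℂ f U) (k : ℕ) : AnalyticOnNhd ℂ (iteratedDeriv k f) U := by
  induction k with
  | zero => simpa [iteratedDeriv_zero] using hf
  | succ k IH => rw [iteratedDeriv_succ]; exact IH.deriv

lemma iteratedDeriv_mul_const (n : ℕ) (f : ℂ → ℂ) (c : ℂ) :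
    iteratedDeriv n (fun t => f t * c) = fun t => iteratedDeriv n f t * c := by
  induction n with
  | zero => simp
  | succ n IH => rw [iteratedDeriv_succ, IH, iteratedDeriv_succ]; exact deriv_mul_const_field' c

lemma iteratedDeriv_div_const' (n : ℕ) (f : ℂ → ℂ) (c : ℂ) :
    iteratedDeriv n (fun t => f t / c) = fun t => iteratedDeriv n f t / c := by
  simp only [div_eq_mul_inv]; exact iteratedDeriv_mul_const n f c⁻¹

lemma iteratedDeriv_iteratedDeriv (a b : ℕ) (f : ℂ → ℂ) :
    iteratedDeriv a (iteratedDeriv b f) = iteratedDeriv (a + b) f := by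
  simp only [iteratedDeriv_eq_iterate]
  exact (Function.iterate_add_apply deriv a b f).symm

lemma leibniz_prod {m : ℕ} {U : Set ℂ} (hU : IsOpen U) (f : Fin m → ℂ → ℂ)
    (hf : ∀ j, AnalyticOnNhd ℂ (f j) U) (n : ℕ) :
    Set.EqOn (iteratedDeriv n (fun t => ∏ j, f j t))
      (fun x => (n.factorial : ℂ) *
        ∑ q ∈ comps m n, ∏ j, iteratedDeriv (q j) (f j) x / ((q j).factorial : ℂ)) U := by
  induction n with
  | zero =>
    intro x hx
    simp [comps_zero]
  | succ n IH =>
    intro x hx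
    have hdiffat : ∀ (k : ℕ) (j : Fin m), DifferentiableAt ℂ (iteratedDeriv k (f j)) x :=
      fun k j => (analyticOnNhd_iteratedDeriv (hf j) k x hx).differentiableAt
    -- rewrite the (n+1)-st derivative as deriv of RHS_n
    rw [iteratedDeriv_succ]
    have hEE : iteratedDeriv n (fun t => ∏ j, f j t) =ᶠ[nhds x]
        (fun x => (n.factorial : ℂ) *
          ∑ q ∈ comps m n, ∏ j, iteratedDeriv (q j) (f j) x / ((q j).factorial : ℂ)) := by
      filter_upwards [hU.mem_nhds hx] with t ht using IH ht
    rw [hEE.deriv_eq]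
    -- differentiate the sum of products
    have hterm : ∀ q ∈ comps m n, HasDerivAt
        (fun x => ∏ j, iteratedDeriv (q j) (f j) x / ((q j).factorial : ℂ))
        (∑ j, (∏ j' ∈ Finset.univ.erase j,
            iteratedDeriv (q j') (f j') x / ((q j').factorial : ℂ)) •
          (iteratedDeriv (q j + 1) (f j) x / ((q j).factorial : ℂ))) x := by
      intro q _
      exact HasDerivAt.fun_finsetProd (fun j _ => by
        have h1 : HasDerivAt (iteratedDeriv (q j) (f j))
            (iteratedDeriv (q j + 1) (f j) x) x := by
          have := (hdiffat (q j) j).hasDerivAt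
          rwa [← iteratedDeriv_succ] at this
        exact h1.div_const _)
    have hsum := (HasDerivAt.fun_sum hterm)
    rw [deriv_const_mul_field']
    beta_reduce
    rw [hsum.deriv]
    -- now the combinatorial identity
    have hterm2 : ∀ q ∈ comps m n, ∀ j : Fin m,
        (∏ j' ∈ Finset.univ.erase j,
            iteratedDeriv (q j') (f j') x / ((q j').factorial : ℂ)) •
          (iteratedDeriv (q j + 1) (f j) x / ((q j).factorial : ℂ))
        = ((q j : ℂ) + 1) * ∏ j', iteratedDeriv (Function.update q j (q j + 1) j') (f j') x /
            ((Function.update q j (q j + 1) j').factorial : ℂ) := by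
      intro q _ j
      have hsplit : (∏ j', iteratedDeriv (Function.update q j (q j + 1) j') (f j') x /
            ((Function.update q j (q j + 1) j').factorial : ℂ))
          = (iteratedDeriv (q j + 1) (f j) x / ((q j + 1).factorial : ℂ)) *
            ∏ j' ∈ Finset.univ.erase j,
              iteratedDeriv (q j') (f j') x / ((q j').factorial : ℂ) := by
        rw [← Finset.mul_prod_erase _ _ (Finset.mem_univ j), Function.update_self]
        congr 1
        exact Finset.prod_congr rfl fun k hk => by
          rw [Function.update_of_ne (Finset.ne_of_mem_erase hk)]
      have hfac : ((q j + 1).factorial : ℂ) = ((q j : ℂ) + 1) * ((q j).factorial : ℂ) := by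
        rw [Nat.factorial_succ]; push_cast; ring
      have hne : ((q j).factorial : ℂ) ≠ 0 := Nat.cast_ne_zero.mpr (Nat.factorial_ne_zero _)
      have hne1 : ((q j : ℂ) + 1) ≠ 0 := by
        have h0 : ((q j + 1 : ℕ) : ℂ) ≠ 0 := Nat.cast_ne_zero.mpr (Nat.succ_ne_zero _)
        push_cast at h0; exact h0
      have key : ((q j : ℂ) + 1) * (iteratedDeriv (q j + 1) (f j) x / ((q j + 1).factorial : ℂ))
          = iteratedDeriv (q j + 1) (f j) x / ((q j).factorial : ℂ) := by
        rw [hfac, ← mul_div_assoc, mul_div_mul_left _ _ hne1]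
      rw [hsplit, smul_eq_mul, ← mul_assoc, key, mul_comm]
    rw [Finset.sum_congr rfl (fun q hq => Finset.sum_congr rfl (fun j _ => hterm2 q hq j)),
      Finset.sum_comm]
    have hmid : ∀ j : Fin m,
        (∑ q ∈ comps m n, ((q j : ℂ) + 1) *
          ∏ j', iteratedDeriv (Function.update q j (q j + 1) j') (f j') x /
            ((Function.update q j (q j + 1) j').factorial : ℂ))
        = ∑ q' ∈ comps m (n + 1), (q' j : ℂ) *
            ∏ j', iteratedDeriv (q' j') (f j') x / ((q' j').factorial : ℂ) := by
      intro j
      have h1 : ∑ q' ∈ (comps m (n + 1)).filter (fun q' => q' j ≠ 0),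
            ((q' j : ℂ) * ∏ j', iteratedDeriv (q' j') (f j') x / ((q' j').factorial : ℂ))
          = ∑ q' ∈ comps m (n + 1),
            ((q' j : ℂ) * ∏ j', iteratedDeriv (q' j') (f j') x / ((q' j').factorial : ℂ)) := by
        refine Finset.sum_filter_of_ne fun q' _ hne => ?_
        intro h0
        apply hne
        rw [h0, Nat.cast_zero, zero_mul]
      rw [← h1]
      refine Finset.sum_nbij' (fun q => Function.update q j (q j + 1))
        (fun q' => Function.update q' j (q' j - 1)) ?_ ?_ ?_ ?_ ?_
      · intro q hq
        have hsq : ∑ j', q j' = n := (mem_comps q).mp hq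
        have herase : q j + ∑ j' ∈ Finset.univ.erase j, q j' = n := by
          rw [Finset.add_sum_erase _ _ (Finset.mem_univ j)]; exact hsq
        have heq : ∑ j' ∈ Finset.univ.erase j, Function.update q j (q j + 1) j'
            = ∑ j' ∈ Finset.univ.erase j, q j' :=
          Finset.sum_congr rfl fun k hk => by
            rw [Function.update_of_ne (Finset.ne_of_mem_erase hk)]
        simp only [Finset.mem_filter, mem_comps]
        constructor
        · rw [← Finset.add_sum_erase _ _ (Finset.mem_univ j), Function.update_self, heq,
            add_right_comm, herase]
        · simp
      · intro q' hq'
        simp only [Finset.mem_filter, mem_comps] at hq'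
        obtain ⟨hsq, hne0⟩ := hq'
        have herase : q' j + ∑ j' ∈ Finset.univ.erase j, q' j' = n + 1 := by
          rw [Finset.add_sum_erase _ _ (Finset.mem_univ j)]; exact hsq
        have heq : ∑ j' ∈ Finset.univ.erase j, Function.update q' j (q' j - 1) j'
            = ∑ j' ∈ Finset.univ.erase j, q' j' :=
          Finset.sum_congr rfl fun k hk => by
            rw [Function.update_of_ne (Finset.ne_of_mem_erase hk)]
        rw [mem_comps]
        beta_reduce
        rw [← Finset.add_sum_erase _ _ (Finset.mem_univ j), Function.update_self, heq]
        omega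
      · intro q _
        show Function.update (Function.update q j (q j + 1)) j
            (Function.update q j (q j + 1) j - 1) = q
        rw [Function.update_self, Function.update_idem, Nat.add_sub_cancel,
          Function.update_eq_self]
      · intro q' hq'
        simp only [Finset.mem_filter] at hq'
        show Function.update (Function.update q' j (q' j - 1)) j
            (Function.update q' j (q' j - 1) j + 1) = q'
        rw [Function.update_self, Function.update_idem,
          Nat.sub_add_cancel (Nat.one_le_iff_ne_zero.mpr hq'.2), Function.update_eq_self]
      · intro q _
        show ((q j : ℂ) + 1) * _ = ((Function.update q j (q j + 1) j : ℕ) : ℂ) * _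
        rw [Function.update_self]
        push_cast
        ring
    rw [Finset.sum_congr rfl (fun j _ => hmid j)]
    rw [Finset.sum_comm]
    have hlast : ∀ q' ∈ comps m (n + 1),
        (∑ j : Fin m, (q' j : ℂ) *
          ∏ j', iteratedDeriv (q' j') (f j') x / ((q' j').factorial : ℂ))
        = ((n : ℂ) + 1) * ∏ j', iteratedDeriv (q' j') (f j') x / ((q' j').factorial : ℂ) := by
      intro q' hq'
      rw [← Finset.sum_mul]
      congr 1
      rw [← Nat.cast_sum, (mem_comps q').mp hq']
      push_cast; ring
    rw [Finset.sum_congr rfl hlast, ← Finset.mul_sum, ← mul_assoc]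
    congr 1
    rw [Nat.factorial_succ]
    push_cast; ring

lemma pderivCoord_sum_prod {s : ℕ} (i : Fin s) {ι : Type*} (S : Finset ι) (c : ι → ℂ)
    (g : ι → Fin s → ℂ → ℂ) {W : Set ℂ} (hW : IsOpen W)
    (hg : ∀ r k, ∀ x ∈ W, DifferentiableAt ℂ (g r k) x) :
    Set.EqOn (pderivCoord i (fun y => ∑ r ∈ S, c r * ∏ k, g r k (y k)))
      (fun y => ∑ r ∈ S, c r * ∏ k, Function.update (g r) i (deriv (g r i)) k (y k))
      {y | ∀ k, y k ∈ W} := by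
  intro y hy
  have hfun : (fun t => ∑ r ∈ S, c r * ∏ k, g r k (Function.update y i t k))
      = fun t => ∑ r ∈ S, c r * (g r i t * ∏ k ∈ Finset.univ.erase i, g r k (y k)) := by
    funext t
    exact Finset.sum_congr rfl fun r _ => by rw [prod_update_eq]
  have hder : ∀ r ∈ S, HasDerivAt
      (fun t => c r * (g r i t * ∏ k ∈ Finset.univ.erase i, g r k (y k)))
      (c r * (deriv (g r i) (y i) * ∏ k ∈ Finset.univ.erase i, g r k (y k))) (y i) := by
    intro r _
    have h1 : HasDerivAt (g r i) (deriv (g r i) (y i)) (y i) :=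
      (hg r i (y i) (hy i)).hasDerivAt
    exact ((h1.mul_const _).const_mul _)
  have := (HasDerivAt.fun_sum hder).deriv
  have hL : pderivCoord i (fun y => ∑ r ∈ S, c r * ∏ k, g r k (y k)) y
      = ∑ r ∈ S, c r * (deriv (g r i) (y i) * ∏ k ∈ Finset.univ.erase i, g r k (y k)) := by
    simp only [pderivCoord]
    rw [hfun, this]
  rw [hL]
  refine Finset.sum_congr rfl fun r _ => ?_
  congr 1
  rw [prod_apply_split (fun k => Function.update (g r) i (deriv (g r i)) k) y i,
    Function.update_self]
  congr 1
  exact (Finset.prod_congr rfl fun k hk => by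
    rw [Function.update_of_ne (Finset.ne_of_mem_erase hk)]).symm

lemma isOpen_coordSet {s : ℕ} {W : Set ℂ} (hW : IsOpen W) :
    IsOpen {y : Fin s → ℂ | ∀ k, y k ∈ W} := by
  have : {y : Fin s → ℂ | ∀ k, y k ∈ W} = ⋂ k, (fun y : Fin s → ℂ => y k) ⁻¹' W := by
    ext y; simp
  rw [this]
  exact isOpen_iInter_of_finite fun k => (continuous_apply k : Continuous fun y : Fin s → ℂ => y k).isOpen_preimage W hW

lemma pderivCoord_iterate_sum_prod {s : ℕ} (i : Fin s) {ι : Type*} (S : Finset ι) (c : ι → ℂ)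
    (g : ι → Fin s → ℂ → ℂ) {W : Set ℂ} (hW : IsOpen W)
    (hg : ∀ r k, AnalyticOnNhd ℂ (g r k) W) (n : ℕ) :
    Set.EqOn ((pderivCoord i)^[n] (fun y => ∑ r ∈ S, c r * ∏ k, g r k (y k)))
      (fun y => ∑ r ∈ S, c r * ∏ k, Function.update (g r) i (deriv^[n] (g r i)) k (y k))
      {y | ∀ k, y k ∈ W} := by
  induction n with
  | zero =>
    simp only [Function.iterate_zero, id_eq, Function.update_eq_self]
    intro y _; rfl
  | succ n IH =>
    rw [Function.iterate_succ_apply']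
    intro y hy
    have step1 := pderivCoord_eqOn i (isOpen_coordSet hW) IH hy
    rw [step1]
    have hg' : ∀ r k, ∀ x ∈ W, DifferentiableAt ℂ
        (Function.update (g r) i (deriv^[n] (g r i)) k) x := by
      intro r k x hx
      rcases eq_or_ne k i with rfl | hk
      · rw [Function.update_self]
        have h2 : AnalyticOnNhd ℂ (deriv^[n] (g r k)) W := by
          rw [← iteratedDeriv_eq_iterate]
          exact analyticOnNhd_iteratedDeriv (hg r k) n
        exact (h2 x hx).differentiableAt
      · rw [Function.update_of_ne hk]
        exact ((hg r k) x hx).differentiableAt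
    have step2 := pderivCoord_sum_prod i S c
      (fun r => Function.update (g r) i (deriv^[n] (g r i))) hW hg' hy
    rw [step2]
    beta_reduce
    refine Finset.sum_congr rfl fun r _ => ?_
    congr 1
    refine Finset.prod_congr rfl fun k _ => ?_
    rw [Function.update_idem, Function.update_self, Function.iterate_succ_apply' deriv n]

lemma foldr_pderiv_sum_prod {s : ℕ} (μ : Fin s → ℕ) {ι : Type*} (S : Finset ι) (c : ι → ℂ)
    {W : Set ℂ} (hW : IsOpen W) :
    ∀ (l : List (Fin s)), l.Nodup → ∀ (g : ι → Fin s → ℂ → ℂ),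
      (∀ r k, AnalyticOnNhd ℂ (g r k) W) →
      Set.EqOn (((l.map fun i => (pderivCoord i)^[μ i]).foldr (· ∘ ·) id)
          (fun y => ∑ r ∈ S, c r * ∏ k, g r k (y k)))
        (fun y => ∑ r ∈ S, c r *
          ∏ k, (if k ∈ l then deriv^[μ k] (g r k) else g r k) (y k))
        {y | ∀ k, y k ∈ W} := by
  intro l
  induction l with
  | nil =>
    intro _ g _
    simp only [List.map_nil, List.foldr_nil, List.not_mem_nil, if_false]
    intro y _; rfl
  | cons i l IH =>
    intro hnd g hg
    have hi : i ∉ l := (List.nodup_cons.mp hnd).1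
    rw [List.map_cons, List.foldr_cons]
    intro y hy
    have step1 := pderivCoord_iterate_eqOn i (isOpen_coordSet hW) (μ i)
      (IH (List.nodup_cons.mp hnd).2 g hg) hy
    rw [Function.comp_apply, step1]
    have hg2 : ∀ r k, AnalyticOnNhd ℂ
        ((fun k => if k ∈ l then deriv^[μ k] (g r k) else g r k) k) W := by
      intro r k
      by_cases hk : k ∈ l
      · simp only [if_pos hk, ← iteratedDeriv_eq_iterate]
        exact analyticOnNhd_iteratedDeriv (hg r k) (μ k)
      · simp only [if_neg hk]; exact hg r k
    have step2 := pderivCoord_iterate_sum_prod i S c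
      (fun r k => if k ∈ l then deriv^[μ k] (g r k) else g r k) hW
      (fun r k => hg2 r k) (μ i) hy
    rw [step2]
    refine Finset.sum_congr rfl fun r _ => ?_
    congr 1
    refine Finset.prod_congr rfl fun k _ => ?_
    rw [Function.update_apply]
    by_cases hk : k = i
    · subst hk
      simp [hi]
    · simp only [if_neg hk, List.mem_cons]
      by_cases hkl : k ∈ l <;> simp [hkl, hk]

lemma mixedDeriv_sum_prod {s : ℕ} (μ : Fin s → ℕ) {ι : Type*} (S : Finset ι) (c : ι → ℂ)
    (g : ι → Fin s → ℂ → ℂ) {W : Set ℂ} (hW : IsOpen W)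
    (hg : ∀ r k, AnalyticOnNhd ℂ (g r k) W) {y : Fin s → ℂ} (hy : ∀ k, y k ∈ W) :
    mixedDeriv μ (fun y => ∑ r ∈ S, c r * ∏ k, g r k (y k)) y
      = ∑ r ∈ S, c r * ∏ k, iteratedDeriv (μ k) (g r k) (y k) := by
  rw [mixedDeriv, List.ofFn_eq_map]
  have := foldr_pderiv_sum_prod μ S c hW (List.finRange s) (List.nodup_finRange s) g hg hy
  rw [this]
  refine Finset.sum_congr rfl fun r _ => ?_
  congr 1
  exact Finset.prod_congr rfl fun k _ => by
    rw [if_pos (List.mem_finRange k), iteratedDeriv_eq_iterate]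

set_option maxHeartbeats 1000000

lemma zeta_analytic : AnalyticOnNhd ℂ riemannZeta {s : ℂ | 1 < s.re} := by
  refine DifferentiableOn.analyticOnNhd (fun s hs => ?_)
    (isOpen_lt continuous_const Complex.continuous_re)
  refine (differentiableAt_riemannZeta ?_).differentiableWithinAt
  rintro rfl
  simp only [Set.mem_setOf_eq, Complex.one_re] at hs
  exact lt_irrefl 1 hs

lemma shifted_analytic (c : ℂ) (m : ℕ) :
    AnalyticOnNhd ℂ (fun t => iteratedDeriv m riemannZeta (c + t))
      {t : ℂ | 1 < (c + t).re} := by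
  intro t ht
  have h2 : AnalyticAt ℂ (iteratedDeriv m riemannZeta) (c + t) :=
    analyticOnNhd_iteratedDeriv zeta_analytic m _ ht
  have h3 : AnalyticAt ℂ (fun t : ℂ => c + t) t := analyticAt_const.add analyticAt_id
  exact h2.comp h3

lemma shifted_analytic0 (c : ℂ) :
    AnalyticOnNhd ℂ (fun t => riemannZeta (c + t)) {t : ℂ | 1 < (c + t).re} := by
  simpa using shifted_analytic c 0

noncomputable def gRfun (K L : ℕ) (z : ℂ) (R : Fin L → Fin K → ℕ) (i : Fin K) : ℂ → ℂ :=
  fun t => ∏ j, iteratedDeriv (R j i) riemannZeta (z + t) / ((R j i).factorial : ℂ)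

lemma step_beta (K L : ℕ) (ν : Fin L → ℕ) (z : ℂ) :
    Set.EqOn
      (fun α : Fin K → ℂ =>
        ∏ j, iteratedDeriv (ν j) (fun t => ∏ i, riemannZeta (z + α i + t)) 0)
      (fun α : Fin K → ℂ => ∑ R ∈ Fintype.piFinset (fun j => comps K (ν j)),
        (∏ j, ((ν j).factorial : ℂ)) * ∏ i, gRfun K L z R i (α i))
      {α : Fin K → ℂ | ∀ i, 1 < (z + α i).re} := by
  intro α hα
  have hUopen : IsOpen {t : ℂ | ∀ i, 1 < (z + α i + t).re} := by
    have : {t : ℂ | ∀ i : Fin K, 1 < (z + α i + t).re}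
        = ⋂ i, {t : ℂ | 1 < (z + α i + t).re} := by ext t; simp
    rw [this]
    exact isOpen_iInter_of_finite fun i =>
      isOpen_lt continuous_const
        (Complex.continuous_re.comp (continuous_const.add continuous_id))
  have hU0 : (0 : ℂ) ∈ {t : ℂ | ∀ i, 1 < (z + α i + t).re} := by
    intro i
    simpa using hα i
  have hleib : ∀ j : Fin L,
      iteratedDeriv (ν j) (fun t => ∏ i, riemannZeta (z + α i + t)) 0
      = ((ν j).factorial : ℂ) * ∑ r ∈ comps K (ν j),
          ∏ i, iteratedDeriv (r i) riemannZeta (z + α i) / ((r i).factorial : ℂ) := by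
    intro j
    have hf : ∀ i : Fin K, AnalyticOnNhd ℂ (fun t => riemannZeta (z + α i + t))
        {t : ℂ | ∀ i, 1 < (z + α i + t).re} :=
      fun i => (shifted_analytic0 (z + α i)).mono (fun t ht => ht i)
    have h : iteratedDeriv (ν j) (fun t => ∏ i, riemannZeta (z + α i + t)) 0
        = ((ν j).factorial : ℂ) * ∑ r ∈ comps K (ν j),
            ∏ i, iteratedDeriv (r i) (fun t => riemannZeta (z + α i + t)) 0 /
              ((r i).factorial : ℂ) :=
      leibniz_prod hUopen (fun i => fun t => riemannZeta (z + α i + t)) hf (ν j) hU0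
    rw [h]
    congr 1
    refine Finset.sum_congr rfl fun r _ => Finset.prod_congr rfl fun i _ => ?_
    have h2 := congrFun (iteratedDeriv_comp_const_add (r i) riemannZeta (z + α i)) 0
    rw [h2, add_zero]
  calc (∏ j, iteratedDeriv (ν j) (fun t => ∏ i, riemannZeta (z + α i + t)) 0)
      = ∏ j, (((ν j).factorial : ℂ) * ∑ r ∈ comps K (ν j),
          ∏ i, iteratedDeriv (r i) riemannZeta (z + α i) / ((r i).factorial : ℂ)) :=
        Finset.prod_congr rfl fun j _ => hleib j
    _ = (∏ j, ((ν j).factorial : ℂ)) * ∏ j, ∑ r ∈ comps K (ν j),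
          ∏ i, iteratedDeriv (r i) riemannZeta (z + α i) / ((r i).factorial : ℂ) :=
        Finset.prod_mul_distrib
    _ = (∏ j, ((ν j).factorial : ℂ)) * ∑ R ∈ Fintype.piFinset (fun j => comps K (ν j)),
          ∏ j, ∏ i, iteratedDeriv (R j i) riemannZeta (z + α i) / ((R j i).factorial : ℂ) := by
        rw [Finset.prod_univ_sum]
    _ = ∑ R ∈ Fintype.piFinset (fun j => comps K (ν j)),
          (∏ j, ((ν j).factorial : ℂ)) * ∏ i, gRfun K L z R i (α i) := by
        rw [Finset.mul_sum]
        refine Finset.sum_congr rfl fun R _ => ?_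
        congr 1
        rw [Finset.prod_comm]
        rfl

lemma gR_analytic (K L : ℕ) (z : ℂ) (R : Fin L → Fin K → ℕ) (i : Fin K) :
    AnalyticOnNhd ℂ (gRfun K L z R i) {t : ℂ | 1 < (z + t).re} := by
  refine DifferentiableOn.analyticOnNhd (fun x hx => DifferentiableAt.differentiableWithinAt ?_)
    (isOpen_lt continuous_const (Complex.continuous_re.comp (continuous_const.add continuous_id)))
  exact DifferentiableAt.fun_finsetProd fun j _ =>
    (((shifted_analytic z (R j i)) x hx).differentiableAt).div_const _

lemma step_gamma (K L : ℕ) (μ : Fin K → ℕ) (z : ℂ) (hz : 1 < z.re)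
    (R : Fin L → Fin K → ℕ) (i : Fin K) :
    iteratedDeriv (μ i) (gRfun K L z R i) 0
      = ((μ i).factorial : ℂ) * ∑ q ∈ comps L (μ i),
          ∏ j, (iteratedDeriv (q j + R j i) riemannZeta z / ((R j i).factorial : ℂ)) /
            ((q j).factorial : ℂ) := by
  have hWopen : IsOpen {t : ℂ | 1 < (z + t).re} :=
    isOpen_lt continuous_const (Complex.continuous_re.comp (continuous_const.add continuous_id))
  have hW0 : (0 : ℂ) ∈ {t : ℂ | 1 < (z + t).re} := by
    show 1 < (z + 0).re; simpa using hz
  have hf : ∀ j : Fin L, AnalyticOnNhd ℂ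
      (fun t => iteratedDeriv (R j i) riemannZeta (z + t) / ((R j i).factorial : ℂ))
      {t : ℂ | 1 < (z + t).re} := by
    intro j x hx
    exact ((shifted_analytic z (R j i)) x hx).div analyticAt_const
      (Nat.cast_ne_zero.mpr (Nat.factorial_ne_zero _))
  have h : iteratedDeriv (μ i) (gRfun K L z R i) 0
      = ((μ i).factorial : ℂ) * ∑ q ∈ comps L (μ i),
          ∏ j, iteratedDeriv (q j)
            (fun t => iteratedDeriv (R j i) riemannZeta (z + t) / ((R j i).factorial : ℂ)) 0 /
            ((q j).factorial : ℂ) :=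
    leibniz_prod hWopen _ hf (μ i) hW0
  rw [h]
  congr 1
  refine Finset.sum_congr rfl fun q _ => Finset.prod_congr rfl fun j _ => ?_
  congr 1
  rw [iteratedDeriv_div_const']
  beta_reduce
  congr 1
  have h2 := congrFun (iteratedDeriv_comp_const_add (q j)
    (iteratedDeriv (R j i) riemannZeta) z) 0
  rw [h2, add_zero, iteratedDeriv_iteratedDeriv]

lemma main_general (K L : ℕ) (μ : Fin K → ℕ) (ν : Fin L → ℕ) (z : ℂ) (hz : 1 < z.re) :
    mixedDeriv μ
        (fun α : Fin K → ℂ =>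
          mixedDeriv ν
            (fun β : Fin L → ℂ =>
              ∏ i : Fin K, ∏ j : Fin L, riemannZeta (z + α i + β j)) 0) 0 =
      (∏ i, ((μ i).factorial : ℂ)) * (∏ j, ((ν j).factorial : ℂ)) *
        ∑ᶠ (Q : Matrix (Fin K) (Fin L) ℕ) (_ : ∀ i, ∑ j, Q i j = μ i)
          (R : Matrix (Fin K) (Fin L) ℕ) (_ : ∀ j, ∑ i, R i j = ν j),
          ∏ i : Fin K, ∏ j : Fin L,
            iteratedDeriv (Q i j + R i j) riemannZeta z /
              (((Q i j).factorial : ℂ) * ((R i j).factorial : ℂ)) := by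
  have hWopen : IsOpen {t : ℂ | 1 < (z + t).re} :=
    isOpen_lt continuous_const (Complex.continuous_re.comp (continuous_const.add continuous_id))
  -- Step A: compute the inner β-derivatives
  have hF : (fun α : Fin K → ℂ => mixedDeriv ν
        (fun β : Fin L → ℂ => ∏ i : Fin K, ∏ j : Fin L, riemannZeta (z + α i + β j)) 0)
      = fun α : Fin K → ℂ =>
          ∏ j, iteratedDeriv (ν j) (fun t => ∏ i, riemannZeta (z + α i + t)) 0 := by
    funext α
    have hswap : (fun β : Fin L → ℂ => ∏ i : Fin K, ∏ j : Fin L, riemannZeta (z + α i + β j))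
        = fun β : Fin L → ℂ => ∏ j, (fun t => ∏ i, riemannZeta (z + α i + t)) (β j) := by
      funext β
      exact Finset.prod_comm
    rw [hswap]
    exact congrFun
      (mixedDeriv_prod ν (fun _ : Fin L => fun t => ∏ i, riemannZeta (z + α i + t))) 0
  rw [hF]
  -- Step B: locality to replace by the sum of separable functions
  have hcong := mixedDeriv_congr μ (V := {α : Fin K → ℂ | ∀ i, 1 < (z + α i).re})
    (by exact isOpen_coordSet hWopen) (step_beta K L ν z)
    (by intro i; show (1:ℝ) < (z + (0 : Fin K → ℂ) i).re
        simp only [Pi.zero_apply, add_zero]; exact hz)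
  rw [hcong]
  -- Step C: differentiate the separable sum
  have hsum : mixedDeriv μ
        (fun α : Fin K → ℂ => ∑ R ∈ Fintype.piFinset (fun j => comps K (ν j)),
          (∏ j, ((ν j).factorial : ℂ)) * ∏ i, gRfun K L z R i (α i)) 0
      = ∑ R ∈ Fintype.piFinset (fun j => comps K (ν j)),
          (∏ j, ((ν j).factorial : ℂ)) * ∏ i, iteratedDeriv (μ i) (gRfun K L z R i) 0 :=
    mixedDeriv_sum_prod μ _ _ _ hWopen (fun R i => gR_analytic K L z R i)
      (fun k => by show (1:ℝ) < (z + 0).re; simpa using hz)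
  rw [hsum]
  -- Step D: second Leibniz expansion
  have hstep : ∀ R ∈ Fintype.piFinset (fun j => comps K (ν j)),
      (∏ j, ((ν j).factorial : ℂ)) * ∏ i, iteratedDeriv (μ i) (gRfun K L z R i) 0
      = (∏ j, ((ν j).factorial : ℂ)) * ((∏ i, ((μ i).factorial : ℂ)) *
          ∑ Q ∈ Fintype.piFinset (fun i => comps L (μ i)),
            ∏ i, ∏ j, (iteratedDeriv (Q i j + R j i) riemannZeta z /
              ((R j i).factorial : ℂ)) / ((Q i j).factorial : ℂ)) := by
    intro R _
    congr 1
    calc (∏ i, iteratedDeriv (μ i) (gRfun K L z R i) 0)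
        = ∏ i, (((μ i).factorial : ℂ) * ∑ q ∈ comps L (μ i), ∏ j,
            (iteratedDeriv (q j + R j i) riemannZeta z / ((R j i).factorial : ℂ)) /
              ((q j).factorial : ℂ)) :=
          Finset.prod_congr rfl fun i _ => step_gamma K L μ z hz R i
      _ = (∏ i, ((μ i).factorial : ℂ)) * ∏ i, ∑ q ∈ comps L (μ i), ∏ j,
            (iteratedDeriv (q j + R j i) riemannZeta z / ((R j i).factorial : ℂ)) /
              ((q j).factorial : ℂ) := Finset.prod_mul_distrib
      _ = (∏ i, ((μ i).factorial : ℂ)) *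
            ∑ Q ∈ Fintype.piFinset (fun i => comps L (μ i)),
              ∏ i, ∏ j, (iteratedDeriv (Q i j + R j i) riemannZeta z /
                ((R j i).factorial : ℂ)) / ((Q i j).factorial : ℂ) := by
          rw [Finset.prod_univ_sum]
  rw [Finset.sum_congr rfl hstep]
  -- Step E: convert the finsum on the RHS to finite sums
  have hmemQ : ∀ Q : Matrix (Fin K) (Fin L) ℕ,
      (∀ i, ∑ j, Q i j = μ i) ↔
        Q ∈ (Fintype.piFinset (fun i => comps L (μ i)) : Finset (Fin K → Fin L → ℕ)) := by
    intro Q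
    refine Iff.trans ?_ Fintype.mem_piFinset.symm
    exact (forall_congr' fun i => (mem_comps (Q i)).symm)
  have hmemR : ∀ Rm : Matrix (Fin K) (Fin L) ℕ,
      (∀ j, ∑ i, Rm i j = ν j) ↔
        Rm ∈ (Fintype.piFinset (fun j => comps K (ν j))).image
          (fun (R : Fin L → Fin K → ℕ) (i : Fin K) (j : Fin L) => R j i) := by
    intro Rm
    refine Iff.trans ?_ Finset.mem_image.symm
    constructor
    · intro h
      exact ⟨fun j i => Rm i j,
        Fintype.mem_piFinset.mpr fun j => (mem_comps _).mpr (h j), rfl⟩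
    · rintro ⟨R, hR, rfl⟩ j
      exact (mem_comps (R j)).mp (Fintype.mem_piFinset.mp hR j)
  have hfin : (∑ᶠ (Q : Matrix (Fin K) (Fin L) ℕ) (_ : ∀ i, ∑ j, Q i j = μ i)
        (R : Matrix (Fin K) (Fin L) ℕ) (_ : ∀ j, ∑ i, R i j = ν j),
        ∏ i : Fin K, ∏ j : Fin L, iteratedDeriv (Q i j + R i j) riemannZeta z /
          (((Q i j).factorial : ℂ) * ((R i j).factorial : ℂ)))
      = ∑ Q ∈ (Fintype.piFinset (fun i => comps L (μ i)) : Finset (Fin K → Fin L → ℕ)),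
          ∑ Rm ∈ (Fintype.piFinset (fun j => comps K (ν j))).image
            (fun (R : Fin L → Fin K → ℕ) (i : Fin K) (j : Fin L) => R j i),
            ∏ i : Fin K, ∏ j : Fin L, iteratedDeriv (Q i j + Rm i j) riemannZeta z /
              (((Q i j).factorial : ℂ) * ((Rm i j).factorial : ℂ)) := by
    have inner : ∀ Q : Matrix (Fin K) (Fin L) ℕ,
        (∑ᶠ (R : Matrix (Fin K) (Fin L) ℕ) (_ : ∀ j, ∑ i, R i j = ν j),
          ∏ i : Fin K, ∏ j : Fin L, iteratedDeriv (Q i j + R i j) riemannZeta z /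
            (((Q i j).factorial : ℂ) * ((R i j).factorial : ℂ)))
        = ∑ Rm ∈ (Fintype.piFinset (fun j => comps K (ν j))).image
            (fun (R : Fin L → Fin K → ℕ) (i : Fin K) (j : Fin L) => R j i),
            ∏ i : Fin K, ∏ j : Fin L, iteratedDeriv (Q i j + Rm i j) riemannZeta z /
              (((Q i j).factorial : ℂ) * ((Rm i j).factorial : ℂ)) :=
      fun Q => finsum_cond_eq_sum_of_cond_iff _ (fun {Rm} _ => hmemR Rm)
    calc (∑ᶠ (Q : Matrix (Fin K) (Fin L) ℕ) (_ : ∀ i, ∑ j, Q i j = μ i)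
          (R : Matrix (Fin K) (Fin L) ℕ) (_ : ∀ j, ∑ i, R i j = ν j),
          ∏ i : Fin K, ∏ j : Fin L, iteratedDeriv (Q i j + R i j) riemannZeta z /
            (((Q i j).factorial : ℂ) * ((R i j).factorial : ℂ)))
        = ∑ᶠ (Q : Matrix (Fin K) (Fin L) ℕ) (_ : ∀ i, ∑ j, Q i j = μ i),
            ∑ Rm ∈ (Fintype.piFinset (fun j => comps K (ν j))).image
              (fun (R : Fin L → Fin K → ℕ) (i : Fin K) (j : Fin L) => R j i),
              ∏ i : Fin K, ∏ j : Fin L, iteratedDeriv (Q i j + Rm i j) riemannZeta z /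
                (((Q i j).factorial : ℂ) * ((Rm i j).factorial : ℂ)) := by
          exact finsum_congr fun Q => finsum_congr fun _ => inner Q
      _ = _ := finsum_cond_eq_sum_of_cond_iff _ (fun {Q} _ => hmemQ Q)
  rw [hfin]
  -- Step F: final rearrangement
  have himg : ∀ Q : Fin K → Fin L → ℕ,
      (∑ Rm ∈ (Fintype.piFinset (fun j => comps K (ν j))).image
          (fun (R : Fin L → Fin K → ℕ) (i : Fin K) (j : Fin L) => R j i),
          ∏ i : Fin K, ∏ j : Fin L, iteratedDeriv (Q i j + Rm i j) riemannZeta z /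
            (((Q i j).factorial : ℂ) * ((Rm i j).factorial : ℂ)))
      = ∑ R ∈ Fintype.piFinset (fun j => comps K (ν j)),
          ∏ i : Fin K, ∏ j : Fin L, iteratedDeriv (Q i j + R j i) riemannZeta z /
            (((Q i j).factorial : ℂ) * ((R j i).factorial : ℂ)) := by
    intro Q
    refine Finset.sum_image ?_
    intro x _ y _ hxy
    funext j i
    exact congrFun (congrFun hxy i) j
  calc (∑ R ∈ Fintype.piFinset (fun j => comps K (ν j)),
        (∏ j, ((ν j).factorial : ℂ)) * ((∏ i, ((μ i).factorial : ℂ)) *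
          ∑ Q ∈ Fintype.piFinset (fun i => comps L (μ i)),
            ∏ i, ∏ j, (iteratedDeriv (Q i j + R j i) riemannZeta z /
              ((R j i).factorial : ℂ)) / ((Q i j).factorial : ℂ)))
      = ∑ R ∈ Fintype.piFinset (fun j => comps K (ν j)),
          (∏ i, ((μ i).factorial : ℂ)) * (∏ j, ((ν j).factorial : ℂ)) *
          ∑ Q ∈ Fintype.piFinset (fun i => comps L (μ i)),
            ∏ i, ∏ j, (iteratedDeriv (Q i j + R j i) riemannZeta z /
              ((R j i).factorial : ℂ)) / ((Q i j).factorial : ℂ) :=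
        Finset.sum_congr rfl fun R _ => by ring
    _ = (∏ i, ((μ i).factorial : ℂ)) * (∏ j, ((ν j).factorial : ℂ)) *
          ∑ R ∈ Fintype.piFinset (fun j => comps K (ν j)),
          ∑ Q ∈ Fintype.piFinset (fun i => comps L (μ i)),
            ∏ i, ∏ j, (iteratedDeriv (Q i j + R j i) riemannZeta z /
              ((R j i).factorial : ℂ)) / ((Q i j).factorial : ℂ) :=
        (Finset.mul_sum _ _ _).symm
    _ = (∏ i, ((μ i).factorial : ℂ)) * (∏ j, ((ν j).factorial : ℂ)) *
          ∑ Q ∈ Fintype.piFinset (fun i => comps L (μ i)),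
          ∑ R ∈ Fintype.piFinset (fun j => comps K (ν j)),
            ∏ i, ∏ j, (iteratedDeriv (Q i j + R j i) riemannZeta z /
              ((R j i).factorial : ℂ)) / ((Q i j).factorial : ℂ) := by
        rw [Finset.sum_comm]
    _ = (∏ i, ((μ i).factorial : ℂ)) * (∏ j, ((ν j).factorial : ℂ)) *
          ∑ Q ∈ Fintype.piFinset (fun i => comps L (μ i)),
          ∑ R ∈ Fintype.piFinset (fun j => comps K (ν j)),
            ∏ i : Fin K, ∏ j : Fin L, iteratedDeriv (Q i j + R j i) riemannZeta z /
              (((Q i j).factorial : ℂ) * ((R j i).factorial : ℂ)) := by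
        congr 1
        refine Finset.sum_congr rfl fun Q _ => Finset.sum_congr rfl fun R _ => ?_
        refine Finset.prod_congr rfl fun i _ => Finset.prod_congr rfl fun j _ => ?_
        rw [div_div, mul_comm]
    _ = (∏ i, ((μ i).factorial : ℂ)) * (∏ j, ((ν j).factorial : ℂ)) *
          ∑ Q ∈ (Fintype.piFinset (fun i => comps L (μ i)) : Finset (Fin K → Fin L → ℕ)),
          ∑ Rm ∈ (Fintype.piFinset (fun j => comps K (ν j))).image
            (fun (R : Fin L → Fin K → ℕ) (i : Fin K) (j : Fin L) => R j i),
            ∏ i : Fin K, ∏ j : Fin L, iteratedDeriv (Q i j + Rm i j) riemannZeta z /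
              (((Q i j).factorial : ℂ) * ((Rm i j).factorial : ℂ)) := by
        congr 1
        exact Finset.sum_congr rfl fun Q _ => (himg Q).symm

theorem stmt_19 (K L : ℕ) (μ : Fin K → ℕ) (ν : Fin L → ℕ) (σ : ℝ) (hσ : 1 < 2 * σ) :
    mixedDeriv μ
        (fun α : Fin K → ℂ =>
          mixedDeriv ν
            (fun β : Fin L → ℂ =>
              ∏ i : Fin K, ∏ j : Fin L, riemannZeta (2 * σ + α i + β j)) 0) 0 =
      (∏ i, ((μ i).factorial : ℂ)) * (∏ j, ((ν j).factorial : ℂ)) *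
        ∑ᶠ (Q : Matrix (Fin K) (Fin L) ℕ) (_ : ∀ i, ∑ j, Q i j = μ i)
          (R : Matrix (Fin K) (Fin L) ℕ) (_ : ∀ j, ∑ i, R i j = ν j),
          ∏ i : Fin K, ∏ j : Fin L,
            iteratedDeriv (Q i j + R i j) riemannZeta (2 * σ) /
              (((Q i j).factorial : ℂ) * ((R i j).factorial : ℂ)) := by
  have hz : 1 < (2 * (σ : ℂ)).re := by
    have h1 : (2 * (σ : ℂ)) = ((2 * σ : ℝ) : ℂ) := by push_cast; ring
    rw [h1, Complex.ofReal_re]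
    exact hσ
  exact main_general K L μ ν (2 * (σ : ℂ)) hz
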